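/- Let W be the linear form ω_W on the dual algebra A^! defined by composing W ∈ (A^!_m)* with the projection A^! → A^!_m, and let σ_W be the automorphism of A^! induced by Q_W. Then ω_W(xy) = ω_W(σ_W(y)x) for all homogeneous x, y ∈ A^!, i.e., ω_W is a σ_W-twisted trace on A^!. -/

import Mathlib

/-- Concatenation of component tensors: `(ξ ⊗ η)_{f} = ξ_{f|first a} · η_{f|last b}`. -/
def concatT {K : Type*} [Field K] {q : ℕ} {a b M : ℕ} (hab : a + b = M)
    (ξ : (Fin a → Fin q) → K) (η : (Fin b → Fin q) → K) :
    (Fin M → Fin q) → K :=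
  fun f => ξ (fun i => f ⟨i.val, by omega⟩) * η (fun j => f ⟨a + j.val, by omega⟩)

/-- The action of a matrix `Q` on a degree-`b` component tensor,
`(Q^{⊗b} η)_f = Σ_g (∏_i Q_{f i, g i}) η_g`. -/
def qTensor {K : Type*} [Field K] {q : ℕ} {b : ℕ} (Q : Matrix (Fin q) (Fin q) K)
    (η : (Fin b → Fin q) → K) : (Fin b → Fin q) → K :=
  fun f => ∑ g : Fin b → Fin q, (∏ i : Fin b, Q (f i) (g i)) * η g


/-- cyclic shift with new last value μ -/
def cycT {q m : ℕ} (f : Fin (m + 1) → Fin q) (μ : Fin q) : Fin (m + 1) → Fin q :=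
  fun k => if hk : k.val = m then μ else f ⟨k.val + 1, by omega⟩

lemma rot_sum {K : Type*} [Field K] {q m : ℕ}
    (W : (Fin (m + 1) → Fin q) → K) (Q : Matrix (Fin q) (Fin q) K)
    (hQ : ∀ f : Fin (m + 1) → Fin q,
      W f = ∑ ν : Fin q, Q ν (f (Fin.last m)) *
        W (fun k => if k = 0 then ν else f ⟨k.val - 1, Nat.lt_of_le_of_lt (Nat.sub_le _ _) k.isLt⟩))
    (T : (Fin (m + 1) → Fin q) → K) :
    ∑ f : Fin (m + 1) → Fin q, W f * T f
      = ∑ f : Fin (m + 1) → Fin q, ∑ μ : Fin q, (Q (f 0) μ * W f) * T (cycT f μ) := by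
  have L : ∑ f : Fin (m + 1) → Fin q, W f * T f
      = ∑ f : Fin (m + 1) → Fin q, ∑ ν : Fin q,
          (Q ν (f (Fin.last m)) *
            W (fun k => if k = 0 then ν else f ⟨k.val - 1, Nat.lt_of_le_of_lt (Nat.sub_le _ _) k.isLt⟩)) * T f := by
    refine Finset.sum_congr rfl fun f _ => ?_
    rw [hQ f, Finset.sum_mul]
  have hc : ∀ (f : Fin (m + 1) → Fin q) (ν : Fin q),
      cycT (fun k => if k = 0 then ν else f ⟨k.val - 1, Nat.lt_of_le_of_lt (Nat.sub_le _ _) k.isLt⟩) (f (Fin.last m)) = f := by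
    intro f ν
    funext k
    simp only [cycT]
    split_ifs with hk h2
    · exact congrArg f (Fin.ext (by simp [Fin.last, hk]))
    · exact absurd h2 (fun h => by have h' := congrArg Fin.val h; rw [Fin.val_zero] at h'; exact Nat.succ_ne_zero _ h')
    · exact congrArg f (Fin.ext (by simp))
  rw [L]
  refine Eq.trans (Fintype.sum_prod_type (f := fun p : ((Fin (m + 1) → Fin q) × Fin q) =>
      (Q p.2 (p.1 (Fin.last m)) * W fun k => if k = 0 then p.2 else p.1 ⟨k.val - 1, Nat.lt_of_le_of_lt (Nat.sub_le _ _) k.isLt⟩)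
        * T p.1)).symm ?_
  refine Eq.trans ?_ (Fintype.sum_prod_type (f := fun p : ((Fin (m + 1) → Fin q) × Fin q) =>
      (Q (p.1 0) p.2 * W p.1) * T (cycT p.1 p.2)))
  refine Fintype.sum_equiv ⟨fun p => ((fun k => if k = 0 then p.2 else p.1 ⟨k.val - 1, Nat.lt_of_le_of_lt (Nat.sub_le _ _) k.isLt⟩), p.1 (Fin.last m)),
      fun p => (cycT p.1 p.2, p.1 0), ?_, ?_⟩ _ _ ?_
  · rintro ⟨f, ν⟩
    simp only [Prod.mk.injEq]
    refine ⟨hc f ν, by simp⟩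
  · rintro ⟨f, μ⟩
    simp only [Prod.mk.injEq]
    constructor
    · funext k
      by_cases hk : k = 0
      · subst hk; simp [cycT]
      · have hkv : k.val ≠ 0 := fun h => hk (Fin.ext h)
        simp only [hk, if_false, cycT]
        have h2 : ¬ ((⟨k.val - 1, Nat.lt_of_le_of_lt (Nat.sub_le _ _) k.isLt⟩ : Fin (m + 1)).val = m) := by
          have := k.isLt; simp; omega
        simp only [h2, dif_neg]
        exact congrArg f (Fin.ext (by simp; omega))
    · simp [cycT]
  · rintro ⟨f, ν⟩
    simp only [Equiv.coe_fn_mk]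
    rw [hc f ν]
    norm_num

/-- partially rotated pairing tensor -/
def Uaux {K : Type*} [Field K] {q m : ℕ} (Q : Matrix (Fin q) (Fin q) K)
    (a b : ℕ) (hab : a + b = m + 1) (ξ : (Fin a → Fin q) → K) (η : (Fin b → Fin q) → K)
    (j : ℕ) (hj : j ≤ b) (f : Fin (m + 1) → Fin q) : K :=
  ∑ g : Fin j → Fin q,
    (∏ i : Fin j, Q (f ⟨i.val, by have := i.isLt; omega⟩) (g i)) *
    (ξ (fun i => f ⟨j + i.val, by have := i.isLt; omega⟩) *
     η (fun i => if h : i.val + j < b then f ⟨j + a + i.val, by omega⟩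
                 else g ⟨i.val + j - b, by have := i.isLt; omega⟩))

lemma U_zero {K : Type*} [Field K] {q m : ℕ} (Q : Matrix (Fin q) (Fin q) K)
    (a b : ℕ) (hab : a + b = m + 1) (ξ : (Fin a → Fin q) → K) (η : (Fin b → Fin q) → K)
    (f : Fin (m + 1) → Fin q) :
    Uaux Q a b hab ξ η 0 (Nat.zero_le b) f = concatT hab ξ η f := by
  unfold Uaux concatT
  rw [Fintype.sum_unique]
  simp only [Finset.univ_eq_empty, Finset.prod_empty, one_mul]
  congr 1
  · exact congrArg ξ (funext fun i => congrArg f (Fin.ext (by simp)))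
  · refine congrArg η (funext fun i => ?_)
    rw [dif_pos (by have := i.isLt; omega)]
    exact congrArg f (Fin.ext (by simp))

lemma U_last {K : Type*} [Field K] {q m : ℕ} (Q : Matrix (Fin q) (Fin q) K)
    (a b : ℕ) (hab : a + b = m + 1) (ξ : (Fin a → Fin q) → K) (η : (Fin b → Fin q) → K)
    (f : Fin (m + 1) → Fin q) :
    Uaux Q a b hab ξ η b le_rfl f
      = concatT ((Nat.add_comm b a).trans hab) (qTensor Q η) ξ f := by
  unfold Uaux concatT qTensor
  rw [Finset.sum_mul]
  refine Finset.sum_congr rfl fun g _ => ?_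
  have hη : (fun i : Fin b => if h : i.val + b < b then f ⟨b + a + i.val, by omega⟩
      else g ⟨i.val + b - b, by have := i.isLt; omega⟩) = g := by
    funext i
    rw [dif_neg (by omega)]
    exact congrArg g (Fin.ext (by simp))
  rw [hη]
  ring

lemma sum_cons {K : Type*} [AddCommMonoid K] {q j : ℕ} (F : (Fin (j + 1) → Fin q) → K) :
    ∑ g' : Fin (j + 1) → Fin q, F g'
      = ∑ μ : Fin q, ∑ g : Fin j → Fin q, F (Fin.cons (α := fun _ => Fin q) μ g) := by
  rw [← Equiv.sum_comp (Fin.consEquiv fun _ => Fin q) F, Fintype.sum_prod_type]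
  rfl


lemma U_step {K : Type*} [Field K] {q m : ℕ}
    (W : (Fin (m + 1) → Fin q) → K) (Q : Matrix (Fin q) (Fin q) K)
    (hQ : ∀ f : Fin (m + 1) → Fin q,
      W f = ∑ ν : Fin q, Q ν (f (Fin.last m)) *
        W (fun k => if k = 0 then ν else f ⟨k.val - 1, Nat.lt_of_le_of_lt (Nat.sub_le _ _) k.isLt⟩))
    (a b : ℕ) (hab : a + b = m + 1) (ξ : (Fin a → Fin q) → K) (η : (Fin b → Fin q) → K)
    (j : ℕ) (hj : j + 1 ≤ b) :
    ∑ f : Fin (m + 1) → Fin q, W f * Uaux Q a b hab ξ η j (by omega) f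
      = ∑ f : Fin (m + 1) → Fin q, W f * Uaux Q a b hab ξ η (j + 1) hj f := by
  rw [rot_sum W Q hQ (Uaux Q a b hab ξ η j (by omega))]
  refine Finset.sum_congr rfl fun f _ => ?_
  unfold Uaux
  rw [sum_cons, Finset.mul_sum]
  refine Finset.sum_congr rfl fun μ _ => ?_
  rw [Finset.mul_sum, Finset.mul_sum]
  refine Finset.sum_congr rfl fun g _ => ?_
  -- component equalities
  have hA : (∏ i : Fin (j + 1), Q (f ⟨i.val, by have := i.isLt; omega⟩) (Fin.cons (α := fun _ => Fin q) μ g i))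
      = Q (f 0) μ * ∏ i : Fin j, Q (f ⟨i.val + 1, by have := i.isLt; omega⟩) (g i) := by
    rw [Fin.prod_univ_succ]
    simp only [Fin.cons_zero, Fin.cons_succ, Fin.val_succ]
    congr 2
  have hB : (∏ i : Fin j, Q (cycT f μ ⟨i.val, by have := i.isLt; omega⟩) (g i))
      = ∏ i : Fin j, Q (f ⟨i.val + 1, by have := i.isLt; omega⟩) (g i) := by
    refine Finset.prod_congr rfl fun i _ => ?_
    congr 1
    unfold cycT
    rw [dif_neg (by have := i.isLt; simp; omega)]
  have hC : (fun i : Fin a => cycT f μ ⟨j + i.val, by have := i.isLt; omega⟩)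
      = fun i : Fin a => f ⟨j + 1 + i.val, by have := i.isLt; omega⟩ := by
    funext i
    unfold cycT
    rw [dif_neg (by have := i.isLt; simp; omega)]
    exact congrArg f (Fin.ext (by simp; omega))
  have hD : (fun i : Fin b => if h : i.val + j < b
        then cycT f μ ⟨j + a + i.val, by omega⟩
        else g ⟨i.val + j - b, by have := i.isLt; omega⟩)
      = fun i : Fin b => if h : i.val + (j + 1) < b
        then f ⟨j + 1 + a + i.val, by omega⟩
        else Fin.cons (α := fun _ => Fin q) μ g ⟨i.val + (j + 1) - b, by have := i.isLt; omega⟩ := by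
    funext i
    by_cases h1 : i.val + (j + 1) < b
    · rw [dif_pos (by omega), dif_pos h1]
      unfold cycT
      rw [dif_neg (by simp; omega)]
      exact congrArg f (Fin.ext (by simp; omega))
    · by_cases h2 : i.val + j < b
      · -- i.val = b - 1 - j : wraps to μ
        rw [dif_pos h2, dif_neg h1]
        unfold cycT
        rw [dif_pos (by simp; omega)]
        have h3 : (⟨i.val + (j + 1) - b, by have := i.isLt; omega⟩ : Fin (j + 1))
            = (0 : Fin (j + 1)) := Fin.ext (by simp; omega)
        rw [h3, Fin.cons_zero]
      · rw [dif_neg h2, dif_neg h1]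
        have h4 : (⟨i.val + (j + 1) - b, by have := i.isLt; omega⟩ : Fin (j + 1))
            = Fin.succ ⟨i.val + j - b, by have := i.isLt; omega⟩ := Fin.ext (by simp; omega)
        rw [h4, Fin.cons_succ]
  rw [hA, hB, hC, hD]
  ring


/-- `ω_W` is a `σ_W`-twisted trace on the dual algebra `A^!`: for a preregular
`(m+1)`-linear form `W` with cyclicity matrix `Q`, and homogeneous elements
`x, y` of `A^!` of degrees `a, b` with `a + b = m + 1`, represented by
component tensors `ξ, η`, one has `ω_W(xy) = ω_W(σ_W(y)x)`, i.e.
`⟨W, ξ ⊗ η⟩ = ⟨W, (Q^{⊗b}η) ⊗ ξ⟩`. -/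
theorem stmt_13 {K : Type*} [Field K] {q m : ℕ}
    (W : (Fin (m + 1) → Fin q) → K)
    (hnd : ∀ X : Fin q → K,
      (∀ f : Fin (m + 1) → Fin q,
        ∑ μ : Fin q, X μ * W (Function.update f 0 μ) = 0) → X = 0)
    (Q : Matrix (Fin q) (Fin q) K) (hQdet : IsUnit Q.det)
    (hQ : ∀ f : Fin (m + 1) → Fin q,
      W f = ∑ ν : Fin q, Q ν (f (Fin.last m)) *
        W (fun k => if k = 0 then ν else f ⟨k.val - 1, by omega⟩)) :
    ∀ (a b : ℕ) (hab : a + b = m + 1)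
      (ξ : (Fin a → Fin q) → K) (η : (Fin b → Fin q) → K),
      ∑ f : Fin (m + 1) → Fin q, W f * concatT hab ξ η f =
      ∑ f : Fin (m + 1) → Fin q,
        W f * concatT (by omega : b + a = m + 1) (qTensor Q η) ξ f := by
  intro a b hab ξ η
  have key : ∀ j : ℕ, ∀ hj : j ≤ b,
      ∑ f : Fin (m + 1) → Fin q, W f * concatT hab ξ η f
        = ∑ f : Fin (m + 1) → Fin q, W f * Uaux Q a b hab ξ η j hj f := by
    intro j
    induction j with
    | zero =>
      intro hj
      exact Finset.sum_congr rfl fun f _ => by rw [U_zero]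
    | succ j ih =>
      intro hj
      rw [ih (by omega), U_step W Q hQ a b hab ξ η j hj]
  rw [key b le_rfl]
  exact Finset.sum_congr rfl fun f _ => by rw [U_last]
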